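/- Fix ρ₁,…,ρₙ > 0 with ∑ρ_i < 1. The function G(t₁,…,tₙ) = ∑_i ρ_i t_i + ∫₀¹ (∏_j(1 − e^{t_j} x) − 1)/x dx is strictly concave on the open negative orthant {t : t_i < 0 for all i}. -/

import Mathlib

open Finset MeasureTheory

lemma sumN {ι : Type*} [DecidableEq ι] (s : Finset ι) (f : ι → ℝ) :
    ∑ S ∈ s.powerset, ∏ j ∈ S, f j = ∏ j ∈ s, (1 + f j) := by
  simp_rw [add_comm (1:ℝ)]
  rw [Finset.prod_add]
  simp

lemma sumM {ι : Type*} [DecidableEq ι] (s : Finset ι) (f d : ι → ℝ)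
    (hf : ∀ j ∈ s, 1 + f j ≠ 0) :
    ∑ S ∈ s.powerset, (∏ j ∈ S, f j) * (∑ i ∈ S, d i)
      = (∏ j ∈ s, (1 + f j)) * ∑ i ∈ s, d i * (f i / (1 + f i)) := by
  induction s using Finset.induction_on with
  | empty => simp
  | @insert a s ha ih =>
    have hfa : 1 + f a ≠ 0 := hf a (mem_insert_self a s)
    have hfs : ∀ j ∈ s, 1 + f j ≠ 0 := fun j hj => hf j (mem_insert_of_mem hj)
    rw [Finset.sum_powerset_insert ha]
    have h2 : ∀ S ∈ s.powerset, (∏ j ∈ insert a S, f j) * (∑ i ∈ insert a S, d i)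
        = f a * ((∏ j ∈ S, f j) * (∑ i ∈ S, d i)) + (f a * d a) * ∏ j ∈ S, f j := by
      intro S hS
      have haS : a ∉ S := fun h => ha (Finset.mem_powerset.mp hS h)
      rw [Finset.prod_insert haS, Finset.sum_insert haS]
      ring
    rw [Finset.sum_congr rfl h2, Finset.sum_add_distrib, ← Finset.mul_sum, ← Finset.mul_sum,
      ih hfs, sumN, Finset.prod_insert ha, Finset.sum_insert ha]
    field_simp
    ring

lemma sumL {ι : Type*} [DecidableEq ι] (s : Finset ι) (f d : ι → ℝ)
    (hf : ∀ j ∈ s, 1 + f j ≠ 0) :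
    ∑ S ∈ s.powerset, (∏ j ∈ S, f j) * (∑ i ∈ S, d i) ^ 2
      = (∏ j ∈ s, (1 + f j)) *
          ((∑ i ∈ s, d i * (f i / (1 + f i))) ^ 2
            + ∑ i ∈ s, d i ^ 2 * (f i / (1 + f i) - (f i / (1 + f i)) ^ 2)) := by
  induction s using Finset.induction_on with
  | empty => simp
  | @insert a s ha ih =>
    have hfa : 1 + f a ≠ 0 := hf a (mem_insert_self a s)
    have hfs : ∀ j ∈ s, 1 + f j ≠ 0 := fun j hj => hf j (mem_insert_of_mem hj)
    rw [Finset.sum_powerset_insert ha]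
    have h2 : ∀ S ∈ s.powerset, (∏ j ∈ insert a S, f j) * (∑ i ∈ insert a S, d i) ^ 2
        = f a * ((∏ j ∈ S, f j) * (∑ i ∈ S, d i) ^ 2)
          + (2 * f a * d a) * ((∏ j ∈ S, f j) * (∑ i ∈ S, d i))
          + (f a * d a ^ 2) * ∏ j ∈ S, f j := by
      intro S hS
      have haS : a ∉ S := fun h => ha (Finset.mem_powerset.mp hS h)
      rw [Finset.prod_insert haS, Finset.sum_insert haS]
      ring
    rw [Finset.sum_congr rfl h2, Finset.sum_add_distrib, Finset.sum_add_distrib,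
      ← Finset.mul_sum, ← Finset.mul_sum, ← Finset.mul_sum,
      ih hfs, sumM s f d hfs, sumN, Finset.prod_insert ha, Finset.sum_insert ha,
      Finset.sum_insert ha]
    field_simp
    ring

section Core
variable {n : ℕ} (p d : Fin n → ℝ)

private noncomputable def Pf (x : ℝ) : ℝ := ∏ i, (1 - p i * x)
private noncomputable def Af (x : ℝ) : ℝ := ∑ i, d i ^ 2 * (p i / (1 - p i * x))
private noncomputable def Bf (x : ℝ) : ℝ := ∑ i, d i * (p i / (1 - p i * x))
private noncomputable def Cf (x : ℝ) : ℝ := ∑ i, d i ^ 2 * (p i / (1 - p i * x)) ^ 2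
private noncomputable def Sf (x : ℝ) : ℝ := ∑ i, p i / (1 - p i * x)

variable (hp0 : ∀ i, 0 < p i) (hp1 : ∀ i, p i < 1)

include hp0 hp1 in
private lemma hden {x : ℝ} (hx : x ∈ Set.Icc (0:ℝ) 1) (i : Fin n) : 0 < 1 - p i * x := by
  nlinarith [hx.1, hx.2, hp0 i, hp1 i]

include hp0 hp1 in
private lemma pointwise {x : ℝ} (hx : x ∈ Set.Icc (0:ℝ) 1) :
    ∑ S ∈ (univ : Finset (Fin n)).powerset,
        (∏ j ∈ S, (-(p j * x))) * (∑ i ∈ S, d i) ^ 2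
      = Pf p x * (x ^ 2 * Bf p d x ^ 2 - x * Af p d x - x ^ 2 * Cf p d x) := by
  have hne : ∀ j ∈ (univ : Finset (Fin n)), (1:ℝ) + -(p j * x) ≠ 0 := by
    intro j _
    have := hden p hp0 hp1 hx j
    intro h; rw [← sub_eq_add_neg] at h; linarith
  rw [sumL univ (fun j => -(p j * x)) d hne]
  have e0 : ∏ j, ((1:ℝ) + -(p j * x)) = Pf p x := by
    refine Finset.prod_congr rfl fun j _ => by ring
  have e1 : ∑ i, d i * (-(p i * x) / (1 + -(p i * x))) = -(x * Bf p d x) := by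
    rw [show -(x * Bf p d x) = ∑ i, -(x * (d i * (p i / (1 - p i * x)))) by
      simp [Bf, Finset.mul_sum]]
    refine Finset.sum_congr rfl fun i _ => ?_
    rw [← sub_eq_add_neg, neg_div, mul_neg, mul_div_assoc]
    ring
  have e2 : ∑ i, d i ^ 2 * (-(p i * x) / (1 + -(p i * x))
        - (-(p i * x) / (1 + -(p i * x))) ^ 2)
      = -(x * Af p d x) - x ^ 2 * Cf p d x := by
    rw [show -(x * Af p d x) - x ^ 2 * Cf p d x
        = ∑ i, (-(x * (d i ^ 2 * (p i / (1 - p i * x))))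
            - x ^ 2 * (d i ^ 2 * (p i / (1 - p i * x)) ^ 2)) by
      simp [Af, Cf, Finset.mul_sum, Finset.sum_sub_distrib]]
    refine Finset.sum_congr rfl fun i _ => ?_
    have h := (hden p hp0 hp1 hx i).ne'
    rw [← sub_eq_add_neg, div_pow]
    field_simp
  rw [e0, e1, e2]
  ring

include hp0 hp1 in
private lemma hPder {x : ℝ} (hx : x ∈ Set.Icc (0:ℝ) 1) :
    HasDerivAt (Pf p) (-(Pf p x * Sf p x)) x := by
  have hfac : ∀ i ∈ (univ : Finset (Fin n)),
      HasDerivAt (fun y => 1 - p i * y) (-(p i)) x := by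
    intro i _
    simpa using ((hasDerivAt_id x).const_mul (p i)).const_sub 1
  have h := HasDerivAt.fun_finsetProd hfac
  convert h using 1
  all_goals try (exact rfl)
  rw [Sf, neg_eq_iff_eq_neg, Finset.mul_sum, ← Finset.sum_neg_distrib]
  refine Finset.sum_congr rfl fun i _ => ?_
  have hne := (hden p hp0 hp1 hx i).ne'
  rw [smul_eq_mul, Pf, ← Finset.mul_prod_erase univ _ (mem_univ i)]
  field_simp

private lemma hasDerivAt_a (i : Fin n) {x : ℝ} (hne : 1 - p i * x ≠ 0) :
    HasDerivAt (fun y => p i / (1 - p i * y)) ((p i / (1 - p i * x)) ^ 2) x := by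
  have hden' : HasDerivAt (fun y => 1 - p i * y) (-(p i)) x := by
    simpa using ((hasDerivAt_id x).const_mul (p i)).const_sub 1
  have h := (hasDerivAt_const x (p i)).div hden' hne
  convert h using 1
  all_goals try (exact rfl)
  rw [div_pow]
  field_simp
  ring

include hp0 hp1 in
private lemma hAder {x : ℝ} (hx : x ∈ Set.Icc (0:ℝ) 1) :
    HasDerivAt (Af p d) (Cf p d x) x := by
  have h : ∀ i ∈ (univ : Finset (Fin n)), HasDerivAt
      (fun y => d i ^ 2 * (p i / (1 - p i * y)))
      (d i ^ 2 * (p i / (1 - p i * x)) ^ 2) x := fun i _ =>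
    (hasDerivAt_a p i (hden p hp0 hp1 hx i).ne').const_mul _
  exact HasDerivAt.fun_sum h

include hp0 hp1 in
private lemma contA : ContinuousOn (Af p d) (Set.Icc (0:ℝ) 1) :=
  fun x hx => ((hAder p d hp0 hp1 hx).continuousAt).continuousWithinAt

include hp0 hp1 in
private lemma contP : ContinuousOn (Pf p) (Set.Icc (0:ℝ) 1) :=
  fun x hx => ((hPder p hp0 hp1 hx).continuousAt).continuousWithinAt

include hp0 hp1 in
private lemma contDiv : ∀ i : Fin n,
    ContinuousOn (fun x => p i / (1 - p i * x)) (Set.Icc (0:ℝ) 1) := by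
  intro i
  refine ContinuousOn.div continuousOn_const (by fun_prop) ?_
  exact fun x hx => (hden p hp0 hp1 hx i).ne'

include hp0 hp1 in
private lemma contB : ContinuousOn (Bf p d) (Set.Icc (0:ℝ) 1) := by
  apply continuousOn_finset_sum
  exact fun i _ => (contDiv p hp0 hp1 i).const_smul (d i)

include hp0 hp1 in
private lemma contC : ContinuousOn (Cf p d) (Set.Icc (0:ℝ) 1) := by
  apply continuousOn_finset_sum
  exact fun i _ => ((contDiv p hp0 hp1 i).pow 2).const_smul (d i ^ 2)

include hp0 hp1 in
private lemma contS : ContinuousOn (Sf p) (Set.Icc (0:ℝ) 1) := by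
  apply continuousOn_finset_sum
  exact fun i _ => contDiv p hp0 hp1 i

include hp0 hp1 in
private lemma ftc :
    ∫ x in (0:ℝ)..1, (Pf p x * Af p d x + x * Pf p x * Cf p d x
        - x * Pf p x * Sf p x * Af p d x) = Pf p 1 * Af p d 1 := by
  have hderiv : ∀ x ∈ Set.uIcc (0:ℝ) 1, HasDerivAt (fun y => y * Pf p y * Af p d y)
      (Pf p x * Af p d x + x * Pf p x * Cf p d x - x * Pf p x * Sf p x * Af p d x) x := by
    intro x hx
    rw [Set.uIcc_of_le zero_le_one] at hx
    have h := (((hasDerivAt_id x).mul (hPder p hp0 hp1 hx)).mul (hAder p d hp0 hp1 hx))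
    convert h using 1
    all_goals try (exact rfl)
    simp only [id, Pi.mul_apply]
    ring
  have hint : IntervalIntegrable (fun x => Pf p x * Af p d x + x * Pf p x * Cf p d x
      - x * Pf p x * Sf p x * Af p d x) volume 0 1 := by
    apply ContinuousOn.intervalIntegrable
    rw [Set.uIcc_of_le zero_le_one]
    have hP := contP p hp0 hp1
    have hA := contA p d hp0 hp1
    have hC := contC p d hp0 hp1
    have hS := contS p hp0 hp1
    exact ((hP.mul hA).add ((continuousOn_id.mul hP).mul hC)).sub
      (((continuousOn_id.mul hP).mul hS).mul hA)
  have := intervalIntegral.integral_eq_sub_of_hasDerivAt hderiv hint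
  rw [this]
  norm_num
include hp0 hp1 in
private lemma Q_repr :
    ∑ S ∈ (univ : Finset (Fin n)).powerset,
        ((-1:ℝ) ^ S.card / S.card) * (∏ i ∈ S, p i) * (∑ i ∈ S, d i) ^ 2
      = ∫ x in (0:ℝ)..1,
          Pf p x * (x * Bf p d x ^ 2 - Af p d x - x * Cf p d x) := by
  have per : ∀ S ∈ (univ : Finset (Fin n)).powerset,
      ((-1:ℝ) ^ S.card / S.card) * (∏ i ∈ S, p i) * (∑ i ∈ S, d i) ^ 2
        = ∫ x in (0:ℝ)..1,
            ((-1:ℝ) ^ S.card * (∏ i ∈ S, p i) * (∑ i ∈ S, d i) ^ 2) * x ^ (S.card - 1) := by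
    intro S _
    rcases S.eq_empty_or_nonempty with rfl | hS
    · simp
    · have hc : 1 ≤ S.card := Finset.card_pos.mpr hS
      rw [intervalIntegral.integral_const_mul, integral_pow, Nat.sub_add_cancel hc]
      have hcast : ((S.card - 1 : ℕ) : ℝ) + 1 = S.card := by
        rw [Nat.cast_sub hc]; push_cast; ring
      rw [hcast, one_pow, zero_pow (by omega : S.card ≠ 0)]
      ring
  rw [Finset.sum_congr rfl per, ← intervalIntegral.integral_finset_sum]
  swap
  · intro S _
    exact (continuous_const.mul (continuous_pow _)).intervalIntegrable _ _
  rw [intervalIntegral.integral_of_le zero_le_one,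
    intervalIntegral.integral_of_le zero_le_one]
  refine setIntegral_congr_fun measurableSet_Ioc fun x hx => ?_
  have hx' : x ∈ Set.Icc (0:ℝ) 1 := ⟨le_of_lt hx.1, hx.2⟩
  have hx0 : x ≠ 0 := ne_of_gt hx.1
  apply mul_left_cancel₀ hx0
  rw [Finset.mul_sum]
  have hterm : ∀ S ∈ (univ : Finset (Fin n)).powerset,
      x * (((-1:ℝ) ^ S.card * (∏ i ∈ S, p i) * (∑ i ∈ S, d i) ^ 2) * x ^ (S.card - 1))
        = (∏ j ∈ S, (-(p j * x))) * (∑ i ∈ S, d i) ^ 2 := by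
    intro S _
    rcases S.eq_empty_or_nonempty with rfl | hS
    · simp
    · have hc : 1 ≤ S.card := Finset.card_pos.mpr hS
      have hprod : ∏ j ∈ S, (-(p j * x)) = (-1:ℝ) ^ S.card * x ^ S.card * ∏ j ∈ S, p j := by
        rw [Finset.prod_congr rfl (fun j _ => by ring : ∀ j ∈ S, -(p j * x) = (-x) * p j),
          Finset.prod_mul_distrib, Finset.prod_const, neg_pow]
      have hxpow : x * x ^ (S.card - 1) = x ^ S.card := by
        rw [mul_comm, ← pow_succ, Nat.sub_add_cancel hc]
      rw [hprod]
      calc x * (((-1:ℝ) ^ S.card * (∏ i ∈ S, p i) * (∑ i ∈ S, d i) ^ 2) * x ^ (S.card - 1))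
          = (x * x ^ (S.card - 1)) * ((-1:ℝ) ^ S.card * (∏ i ∈ S, p i) * (∑ i ∈ S, d i) ^ 2) := by
            ring
        _ = _ := by rw [hxpow]; ring
  rw [Finset.sum_congr rfl hterm, pointwise p d hp0 hp1 hx']
  ring

include hp0 hp1 in
private lemma cauchy {x : ℝ} (hx : x ∈ Set.Icc (0:ℝ) 1) :
    Bf p d x ^ 2 ≤ Sf p x * Af p d x := by
  have ha : ∀ i : Fin n, 0 ≤ p i / (1 - p i * x) :=
    fun i => div_nonneg (hp0 i).le (hden p hp0 hp1 hx i).le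
  have key := Finset.sum_mul_sq_le_sq_mul_sq univ
    (fun i => Real.sqrt (p i / (1 - p i * x)))
    (fun i => d i * Real.sqrt (p i / (1 - p i * x)))
  have e1 : ∑ i, Real.sqrt (p i / (1 - p i * x)) * (d i * Real.sqrt (p i / (1 - p i * x)))
      = Bf p d x := by
    refine Finset.sum_congr rfl fun i _ => ?_
    rw [mul_comm, mul_assoc, Real.mul_self_sqrt (ha i)]
  have e2 : ∑ i, Real.sqrt (p i / (1 - p i * x)) ^ 2 = Sf p x := by
    refine Finset.sum_congr rfl fun i _ => Real.sq_sqrt (ha i)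
  have e3 : ∑ i, (d i * Real.sqrt (p i / (1 - p i * x))) ^ 2 = Af p d x := by
    refine Finset.sum_congr rfl fun i _ => ?_
    rw [mul_pow, Real.sq_sqrt (ha i)]
  rw [e1, e2, e3] at key
  exact key

include hp0 hp1 in
private lemma core_neg (hd : d ≠ 0) :
    ∑ S ∈ (univ : Finset (Fin n)).powerset,
        ((-1:ℝ) ^ S.card / S.card) * (∏ i ∈ S, p i) * (∑ i ∈ S, d i) ^ 2 < 0 := by
  rw [Q_repr p d hp0 hp1]
  have hint1 : IntervalIntegrable (fun x => x * Pf p x * (Bf p d x ^ 2 - Sf p x * Af p d x))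
      volume 0 1 := by
    apply ContinuousOn.intervalIntegrable
    rw [Set.uIcc_of_le zero_le_one]
    exact (continuousOn_id.mul (contP p hp0 hp1)).mul
      (((contB p d hp0 hp1).pow 2).sub ((contS p hp0 hp1).mul (contA p d hp0 hp1)))
  have hint2 : IntervalIntegrable (fun x => Pf p x * Af p d x + x * Pf p x * Cf p d x
      - x * Pf p x * Sf p x * Af p d x) volume 0 1 := by
    apply ContinuousOn.intervalIntegrable
    rw [Set.uIcc_of_le zero_le_one]
    exact (((contP p hp0 hp1).mul (contA p d hp0 hp1)).add
      ((continuousOn_id.mul (contP p hp0 hp1)).mul (contC p d hp0 hp1))).sub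
      (((continuousOn_id.mul (contP p hp0 hp1)).mul (contS p hp0 hp1)).mul (contA p d hp0 hp1))
  have hsplit : (fun x => Pf p x * (x * Bf p d x ^ 2 - Af p d x - x * Cf p d x))
      = fun x => x * Pf p x * (Bf p d x ^ 2 - Sf p x * Af p d x)
        + (Pf p x * Af p d x + x * Pf p x * Cf p d x - x * Pf p x * Sf p x * Af p d x) * (-1) := by
    funext x; ring
  rw [hsplit, intervalIntegral.integral_add hint1 (hint2.mul_const _),
    intervalIntegral.integral_mul_const, ftc p d hp0 hp1]
  have hPpos : 0 < Pf p 1 := by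
    refine Finset.prod_pos fun i _ => ?_
    exact hden p hp0 hp1 (Set.mem_Icc.mpr ⟨zero_le_one, le_refl 1⟩) i
  have hApos : 0 < Af p d 1 := by
    obtain ⟨i₀, hi₀⟩ := Function.ne_iff.mp hd
    refine Finset.sum_pos' (fun i _ => ?_) ⟨i₀, Finset.mem_univ i₀, ?_⟩
    · exact mul_nonneg (sq_nonneg _)
        (div_nonneg (hp0 i).le (hden p hp0 hp1 (Set.mem_Icc.mpr ⟨zero_le_one, le_refl 1⟩) i).le)
    · exact mul_pos (lt_of_le_of_ne (sq_nonneg _) (Ne.symm (pow_ne_zero 2 hi₀)))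
        (div_pos (hp0 i₀) (hden p hp0 hp1 (Set.mem_Icc.mpr ⟨zero_le_one, le_refl 1⟩) i₀))
  have hneg : ∫ x in (0:ℝ)..1, x * Pf p x * (Bf p d x ^ 2 - Sf p x * Af p d x) ≤ 0 := by
    have h0 : (∫ _x in (0:ℝ)..1, (0:ℝ)) = 0 := by simp
    refine le_trans (intervalIntegral.integral_mono_on zero_le_one hint1
      intervalIntegrable_const fun x hx => ?_) (le_of_eq h0)
    have h1 : 0 ≤ x * Pf p x := mul_nonneg hx.1
      (Finset.prod_pos (fun i _ => hden p hp0 hp1 hx i)).le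
    have h2 : Bf p d x ^ 2 - Sf p x * Af p d x ≤ 0 :=
      sub_nonpos.mpr (cauchy p d hp0 hp1 hx)
    exact mul_nonpos_of_nonneg_of_nonpos h1 h2
  have := mul_pos hPpos hApos
  linarith
end Core

private lemma int_repr {n : ℕ} (t : Fin n → ℝ) :
    ∫ x in Set.Ioo (0:ℝ) 1, ((∏ j, (1 - Real.exp (t j) * x)) - 1) / x
      = ∑ S ∈ (univ : Finset (Fin n)).powerset,
          ((-1:ℝ) ^ S.card / S.card) * ∏ i ∈ S, Real.exp (t i) := by
  set p : Fin n → ℝ := fun j => Real.exp (t j) with hp_def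
  have hmem : ∅ ∈ (univ : Finset (Fin n)).powerset := Finset.empty_mem_powerset _
  rw [← integral_Ioc_eq_integral_Ioo, ← intervalIntegral.integral_of_le zero_le_one]
  have step1 : ∫ x in (0:ℝ)..1, ((∏ j, (1 - p j * x)) - 1) / x
      = ∫ x in (0:ℝ)..1, ∑ S ∈ ((univ : Finset (Fin n)).powerset).erase ∅,
          (((-1:ℝ) ^ S.card * ∏ i ∈ S, p i) * x ^ (S.card - 1)) := by
    rw [intervalIntegral.integral_of_le zero_le_one,
      intervalIntegral.integral_of_le zero_le_one]
    refine setIntegral_congr_fun measurableSet_Ioc fun x hx => ?_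
    have hx0 : x ≠ 0 := ne_of_gt hx.1
    have hprod : (∏ j, (1 - p j * x)) - 1
        = ∑ S ∈ ((univ : Finset (Fin n)).powerset).erase ∅, ∏ j ∈ S, (-(p j * x)) := by
      have hN : ∑ S ∈ (univ : Finset (Fin n)).powerset, ∏ j ∈ S, (-(p j * x))
          = ∏ j, (1 - p j * x) := by
        rw [sumN]
        exact Finset.prod_congr rfl fun j _ => by ring
      rw [← hN, ← Finset.add_sum_erase _ _ hmem]
      simp
    rw [hprod, Finset.sum_div]
    refine Finset.sum_congr rfl fun S hS => ?_
    have hSne : S.Nonempty := Finset.nonempty_of_ne_empty (Finset.mem_erase.mp hS).1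
    have hc : 1 ≤ S.card := Finset.card_pos.mpr hSne
    have hprodS : ∏ j ∈ S, (-(p j * x)) = (-1:ℝ) ^ S.card * x ^ S.card * ∏ j ∈ S, p j := by
      rw [Finset.prod_congr rfl (fun j _ => by ring : ∀ j ∈ S, -(p j * x) = (-x) * p j),
        Finset.prod_mul_distrib, Finset.prod_const, neg_pow]
    have hxpow : x ^ S.card = x * x ^ (S.card - 1) := by
      rw [mul_comm, ← pow_succ, Nat.sub_add_cancel hc]
    rw [hprodS, hxpow]
    field_simp
  rw [step1, intervalIntegral.integral_finset_sum
    (fun S _ => (continuous_const.fun_mul (continuous_pow _)).intervalIntegrable _ _)]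
  have per : ∀ S ∈ ((univ : Finset (Fin n)).powerset).erase ∅,
      (∫ x in (0:ℝ)..1, ((-1:ℝ) ^ S.card * ∏ i ∈ S, p i) * x ^ (S.card - 1))
        = ((-1:ℝ) ^ S.card / S.card) * ∏ i ∈ S, p i := by
    intro S hS
    have hSne : S.Nonempty := Finset.nonempty_of_ne_empty (Finset.mem_erase.mp hS).1
    have hc : 1 ≤ S.card := Finset.card_pos.mpr hSne
    rw [intervalIntegral.integral_const_mul, integral_pow, Nat.sub_add_cancel hc]
    have hcast : ((S.card - 1 : ℕ) : ℝ) + 1 = S.card := by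
      rw [Nat.cast_sub hc]; push_cast; ring
    rw [hcast, one_pow, zero_pow (by omega : S.card ≠ 0)]
    ring
  rw [Finset.sum_congr rfl per, ← Finset.add_sum_erase _ _ hmem]
  simp

private lemma mainConcave (n : ℕ) (ρ : Fin n → ℝ) :
    StrictConcaveOn ℝ {t : Fin n → ℝ | ∀ i, t i < 0}
      (fun t : Fin n → ℝ => ∑ i, ρ i * t i
        + ∑ S ∈ (univ : Finset (Fin n)).powerset,
            ((-1:ℝ) ^ S.card / S.card) * ∏ i ∈ S, Real.exp (t i)) := by
  have hconv : Convex ℝ {t : Fin n → ℝ | ∀ i, t i < 0} := by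
    intro x hx y hy a b ha hb hab
    intro i
    have hxi := hx i
    have hyi := hy i
    show a * x i + b * y i < 0
    rcases eq_or_lt_of_le ha with rfl | ha'
    · have hb1 : b = 1 := by linarith
      rw [hb1] at *
      simpa using hyi
    · have h1 : a * x i < 0 := mul_neg_of_pos_of_neg ha' hxi
      have h2 : b * y i ≤ 0 := mul_nonpos_of_nonneg_of_nonpos hb hyi.le
      linarith
  refine ⟨hconv, ?_⟩
  intro x hx y hy hxy a b ha hb hab
  set d : Fin n → ℝ := fun i => x i - y i with hd_def
  have hd : d ≠ 0 := by
    intro h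
    apply hxy
    funext i
    have := congrFun h i
    simpa [hd_def, sub_eq_zero] using this
  set g : ℝ → ℝ := fun u => ∑ i, ρ i * (y i + u * d i)
      + ∑ S ∈ (univ : Finset (Fin n)).powerset,
          ((-1:ℝ) ^ S.card / S.card)
            * Real.exp ((∑ i ∈ S, y i) + u * ∑ i ∈ S, d i) with hg_def
  set g1 : ℝ → ℝ := fun u => (∑ i, ρ i * d i)
      + ∑ S ∈ (univ : Finset (Fin n)).powerset,
          ((-1:ℝ) ^ S.card / S.card)
            * (Real.exp ((∑ i ∈ S, y i) + u * ∑ i ∈ S, d i) * ∑ i ∈ S, d i) with hg1_def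
  set g2 : ℝ → ℝ := fun u =>
      ∑ S ∈ (univ : Finset (Fin n)).powerset,
          ((-1:ℝ) ^ S.card / S.card)
            * (Real.exp ((∑ i ∈ S, y i) + u * ∑ i ∈ S, d i)
                * (∑ i ∈ S, d i) * ∑ i ∈ S, d i) with hg2_def
  have haff : ∀ (c e : ℝ) (u : ℝ), HasDerivAt (fun v => c + v * e) e u := by
    intro c e u
    simpa using ((hasDerivAt_id u).mul_const e).const_add c
  have hg : ∀ u, HasDerivAt g (g1 u) u := by
    intro u
    apply HasDerivAt.add
    · have : ∀ i ∈ (univ : Finset (Fin n)), HasDerivAt (fun v => ρ i * (y i + v * d i))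
          (ρ i * d i) u := fun i _ => (haff (y i) (d i) u).const_mul (ρ i)
      exact HasDerivAt.fun_sum this
    · refine HasDerivAt.fun_sum fun S _ => ?_
      exact ((haff _ _ u).exp).const_mul _
  have hg1 : ∀ u, HasDerivAt g1 (g2 u) u := by
    intro u
    have h0 : HasDerivAt (fun _ : ℝ => ∑ i, ρ i * d i) 0 u := hasDerivAt_const u _
    have h1 : HasDerivAt (fun v => ∑ S ∈ (univ : Finset (Fin n)).powerset,
        ((-1:ℝ) ^ S.card / S.card)
          * (Real.exp ((∑ i ∈ S, y i) + v * ∑ i ∈ S, d i) * ∑ i ∈ S, d i)) (g2 u) u := by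
      refine HasDerivAt.fun_sum fun S _ => ?_
      exact (((haff _ _ u).exp).mul_const _).const_mul _
    simpa only [zero_add] using h0.fun_add h1
  have hneg : ∀ u ∈ Set.Icc (0:ℝ) 1, g2 u < 0 := by
    intro u hu
    set pe : Fin n → ℝ := fun i => Real.exp (y i + u * d i) with hpe_def
    have hp0 : ∀ i, 0 < pe i := fun i => Real.exp_pos _
    have hp1 : ∀ i, pe i < 1 := by
      intro i
      have hyi := hy i
      have hxi := hx i
      have harg : y i + u * d i < 0 := by
        simp only [hd_def]
        rcases eq_or_lt_of_le hu.1 with rfl | hu'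
        · simpa using hyi
        · have f1 : (1 - u) * (-(y i)) ≥ 0 :=
            mul_nonneg (by linarith [hu.2]) (by linarith)
          have f2 : u * (-(x i)) > 0 := mul_pos hu' (by linarith)
          nlinarith
      exact Real.exp_lt_one_iff.mpr harg
    have hkey := core_neg pe d hp0 hp1 hd
    have : g2 u = ∑ S ∈ (univ : Finset (Fin n)).powerset,
        ((-1:ℝ) ^ S.card / S.card) * (∏ i ∈ S, pe i) * (∑ i ∈ S, d i) ^ 2 := by
      rw [hg2_def]
      refine Finset.sum_congr rfl fun S _ => ?_
      rw [show (∑ i ∈ S, y i) + u * ∑ i ∈ S, d i = ∑ i ∈ S, (y i + u * d i) by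
        rw [Finset.mul_sum, ← Finset.sum_add_distrib]]
      rw [Real.exp_sum]
      ring
    rw [this]
    exact hkey
  have hcont : ContinuousOn g (Set.Icc (0:ℝ) 1) := by
    apply Continuous.continuousOn
    apply Continuous.add
    · exact continuous_finset_sum _ fun i _ => by fun_prop
    · exact continuous_finset_sum _ fun S _ => by fun_prop
  have hstrict : StrictConcaveOn ℝ (Set.Icc (0:ℝ) 1) g := by
    refine strictConcaveOn_of_deriv2_neg (convex_Icc 0 1) hcont fun u hu => ?_
    rw [interior_Icc] at hu
    have e1 : deriv g = g1 := funext fun v => (hg v).deriv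
    have : deriv^[2] g u = deriv (deriv g) u := by
      simp [Function.iterate_succ, Function.iterate_one]
    rw [this, e1, (hg1 u).deriv]
    exact hneg u ⟨hu.1.le, hu.2.le⟩
  have happ := hstrict.2 (Set.mem_Icc.mpr ⟨zero_le_one, le_refl 1⟩)
    (Set.mem_Icc.mpr ⟨le_refl 0, zero_le_one⟩) one_ne_zero ha hb hab
  have hb' : b = 1 - a := by linarith
  have hg1x : g 1 = ∑ i, ρ i * x i
      + ∑ S ∈ (univ : Finset (Fin n)).powerset,
          ((-1:ℝ) ^ S.card / S.card) * ∏ i ∈ S, Real.exp (x i) := by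
    simp only [hg_def]
    congr 1
    · exact Finset.sum_congr rfl fun i _ => by simp only [hd_def]; ring
    · refine Finset.sum_congr rfl fun S _ => ?_
      rw [show (∑ i ∈ S, y i) + 1 * ∑ i ∈ S, d i = ∑ i ∈ S, x i by
        simp [hd_def, Finset.sum_sub_distrib]]
      rw [Real.exp_sum]
  have hg0y : g 0 = ∑ i, ρ i * y i
      + ∑ S ∈ (univ : Finset (Fin n)).powerset,
          ((-1:ℝ) ^ S.card / S.card) * ∏ i ∈ S, Real.exp (y i) := by
    simp only [hg_def]
    congr 1
    · exact Finset.sum_congr rfl fun i _ => by simp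
    · refine Finset.sum_congr rfl fun S _ => ?_
      rw [show (∑ i ∈ S, y i) + 0 * ∑ i ∈ S, d i = ∑ i ∈ S, y i by ring]
      rw [Real.exp_sum]
  have hga : g a = ∑ i, ρ i * (a • x + b • y) i
      + ∑ S ∈ (univ : Finset (Fin n)).powerset,
          ((-1:ℝ) ^ S.card / S.card) * ∏ i ∈ S, Real.exp ((a • x + b • y) i) := by
    simp only [hg_def]
    congr 1
    · refine Finset.sum_congr rfl fun i _ => ?_
      simp only [Pi.add_apply, Pi.smul_apply, smul_eq_mul, hd_def, hb']
      ring
    · refine Finset.sum_congr rfl fun S _ => ?_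
      rw [show (∑ i ∈ S, y i) + a * ∑ i ∈ S, d i = ∑ i ∈ S, (a • x + b • y) i by
        simp only [Pi.add_apply, Pi.smul_apply, smul_eq_mul, hd_def, hb', Finset.mul_sum,
          ← Finset.sum_add_distrib]
        exact Finset.sum_congr rfl fun i _ => by ring]
      rw [Real.exp_sum]
  have hcomb : a • (1:ℝ) + b • (0:ℝ) = a := by simp
  rw [hcomb] at happ
  simp only [smul_eq_mul] at happ ⊢
  rw [hg1x, hg0y, hga] at happ
  exact happ

theorem stmt_8 (n : ℕ) (ρ : Fin n → ℝ) (hρ : ∀ i, 0 < ρ i) (hsum : ∑ i, ρ i < 1) :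
    StrictConcaveOn ℝ {t : Fin n → ℝ | ∀ i, t i < 0}
      (fun t : Fin n → ℝ =>
        ∑ i, ρ i * t i +
          ∫ x in Set.Ioo (0 : ℝ) 1, ((∏ j, (1 - Real.exp (t j) * x)) - 1) / x) := by
  have hfun : (fun t : Fin n → ℝ =>
        ∑ i, ρ i * t i +
          ∫ x in Set.Ioo (0 : ℝ) 1, ((∏ j, (1 - Real.exp (t j) * x)) - 1) / x)
      = fun t : Fin n → ℝ => ∑ i, ρ i * t i
        + ∑ S ∈ (univ : Finset (Fin n)).powerset,
            ((-1:ℝ) ^ S.card / S.card) * ∏ i ∈ S, Real.exp (t i) := by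
    funext t
    rw [int_repr t]
  rw [hfun]
  exact mainConcave n ρ
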